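/- arXiv:1705.10254 — 2 statements merged into one kernel-verified Lean document; each statement's English description precedes it below -/
import Mathlib

section
/- Fix integers λ ≥ 2 and t ≥ 1. Let H be a Hamiltonian graph with m ≥ λ vertices and let u₀ be a vertex of H. If the degree of u₀ in H is at least 2t - 1 + max{2λ - m - 1, 2}, then there exists an integer l ≥ λ such that H contains a copy of the keyring C_t(l) whose center is u₀. -/
/-- The keyring `C_r(l)`: a cycle of length `l` (on `Fin l`, defined for `l ≥ 3`)
with `r` pendant leaves (the vertices `Fin r`) appended to the cycle vertex `Sum.inl 0`,
which is the center of the keyring. -/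
def keyring (l r : ℕ) : SimpleGraph (Fin l ⊕ Fin r) :=
  SimpleGraph.fromRel (fun a b =>
    match a, b with
    | Sum.inl i, Sum.inl j => (i.val + 1) % l = j.val
    | Sum.inl i, Sum.inr _ => i.val = 0
    | _, _ => False)

lemma walk_support_eq_map {V : Type*} {G : SimpleGraph V} :
    ∀ {u v : V} (p : G.Walk u v),
    p.support = (List.range (p.length + 1)).map p.getVert := by
  intro u v p
  induction p with
  | nil => rfl
  | cons h q ih =>
    rw [SimpleGraph.Walk.support_cons, SimpleGraph.Walk.length_cons,
      List.range_succ_eq_map, List.map_cons, List.map_map, ih]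
    simp [Function.comp_def, SimpleGraph.Walk.getVert_cons_succ]

open SimpleGraph Walk in
lemma exists_enum {V : Type*} [Fintype V] [DecidableEq V] (H : SimpleGraph V)
    (hHam : H.IsHamiltonian) (u₀ : V) (hcard : 3 ≤ Fintype.card V) :
    ∃ v : ℕ → V, v 0 = u₀ ∧
      (∀ k, k + 1 < Fintype.card V → H.Adj (v k) (v (k + 1))) ∧
      H.Adj (v (Fintype.card V - 1)) u₀ ∧
      (∀ i j, i < Fintype.card V → j < Fintype.card V → v i = v j → i = j) ∧
      (∀ w, ∃ k, k < Fintype.card V ∧ v k = w) := by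
  obtain ⟨a, p, hp⟩ := hHam (by omega)
  have hu₀ : u₀ ∈ p.support := hp.mem_support u₀
  set q : H.Walk u₀ u₀ := p.rotate u₀ hu₀ with hq'
  have hq : q.IsHamiltonianCycle := by
    rw [Walk.isHamiltonianCycle_iff_isCycle_and_support_count_tail_eq_one] at hp ⊢
    refine ⟨hp.1.rotate hu₀, fun b => ?_⟩
    rw [(Walk.support_rotate p u₀ hu₀).perm.count_eq]
    exact hp.2 b
  set m := Fintype.card V with hm
  have hlen : q.length = m := hq.length_eq
  refine ⟨q.getVert, q.getVert_zero, ?_, ?_, ?_, ?_⟩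
  · intro k hk
    exact q.adj_getVert_succ (by omega)
  · have h1 := q.adj_getVert_succ (i := m - 1) (by omega)
    have h2 : q.getVert (m - 1 + 1) = u₀ := by
      rw [show m - 1 + 1 = m by omega, ← hlen, q.getVert_length]
    rwa [h2] at h1
  · -- injectivity
    have hsupp := walk_support_eq_map q
    have htail : q.support.tail = (List.range m).map (fun k => q.getVert (k + 1)) := by
      rw [hsupp, hlen, List.range_succ_eq_map, List.map_cons, List.map_map]
      simp [Function.comp_def]
    have hnd : q.support.tail.Nodup := hq.isCycle.support_nodup
    rw [htail] at hnd
    have hinj := List.inj_on_of_nodup_map hnd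
    intro i j hi hj hij
    have hu : ∀ k, k < m → q.getVert k = u₀ → k = 0 := by
      intro k hk hk0
      by_contra hk00
      have h1 : k - 1 ∈ List.range m := List.mem_range.mpr (by omega)
      have h2 : m - 1 ∈ List.range m := List.mem_range.mpr (by omega)
      have : q.getVert (k - 1 + 1) = q.getVert (m - 1 + 1) := by
        rw [show k - 1 + 1 = k by omega, show m - 1 + 1 = m by omega, ← hlen,
          q.getVert_length, hk0]
      have := hinj h1 h2 this
      omega
    rcases Nat.eq_zero_or_pos i with hi0 | hi0
    · subst hi0
      exact (hu j hj (by rw [← hij, q.getVert_zero])).symm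
    rcases Nat.eq_zero_or_pos j with hj0 | hj0
    · subst hj0
      exact absurd (hu i hi (by rw [hij, q.getVert_zero])) (by omega)
    have h1 : i - 1 ∈ List.range m := List.mem_range.mpr (by omega)
    have h2 : j - 1 ∈ List.range m := List.mem_range.mpr (by omega)
    have : q.getVert (i - 1 + 1) = q.getVert (j - 1 + 1) := by
      rw [show i - 1 + 1 = i by omega, show j - 1 + 1 = j by omega, hij]
    have := hinj h1 h2 this
    omega
  · intro w
    have hw : w ∈ q.support := hq.mem_support w
    rw [Walk.mem_support_iff_exists_getVert] at hw
    obtain ⟨n, hn, hn'⟩ := hw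
    rcases Nat.lt_or_ge n m with h | h
    · exact ⟨n, h, hn⟩
    · refine ⟨0, by omega, ?_⟩
      rw [q.getVert_zero, ← hn, show n = q.length by omega, q.getVert_length]

lemma core_lemma (lam t m : ℕ) (hlam : 3 ≤ lam) (ht : 1 ≤ t)
    (S : Finset ℕ) (hS : S ⊆ Finset.Ico 1 m) (h1 : 1 ∈ S) (hm1 : m - 1 ∈ S)
    (hd : 2 * t - 1 + max (2 * lam - m - 1) 2 ≤ S.card) :
    ∃ a ∈ S, ∃ b ∈ S, a < b ∧ lam ≤ b - a + 2 ∧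
      ∃ g : Fin t → ℕ, StrictMono g ∧ (∀ j, g j ∈ S) ∧ (∀ j, g j < a ∨ b < g j) := by
  set d := S.card with hdd
  have hd2 : 2 * t + 1 ≤ d := by
    have := le_max_right (2 * lam - m - 1) 2
    omega
  have hdm : d ≤ m - 1 := by
    have := Finset.card_le_card hS
    rwa [Nat.card_Ico] at this
  set E : ℕ → ℕ := fun k => if h : k < d then (S.orderEmbOfFin hdd.symm) ⟨k, h⟩ else 0 with hE
  have hEeq : ∀ k (h : k < d), E k = (S.orderEmbOfFin hdd.symm) ⟨k, h⟩ := by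
    intro k h; simp [hE, dif_pos h]
  have hEmem : ∀ k, k < d → E k ∈ S := by
    intro k h; rw [hEeq k h]; exact Finset.orderEmbOfFin_mem S hdd.symm _
  have hmono : ∀ i j, i < j → j < d → E i < E j := by
    intro i j hij hj
    rw [hEeq i (by omega), hEeq j hj]
    exact (S.orderEmbOfFin hdd.symm).strictMono (by exact Fin.mk_lt_mk.mpr hij)
  have hmono' : ∀ i j, i ≤ j → j < d → E i ≤ E j := by
    intro i j hij hj
    rcases Nat.eq_or_lt_of_le hij with rfl | h
    · exact le_rfl
    · exact (hmono i j h hj).le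
  have hSge : ∀ x ∈ S, 1 ≤ x ∧ x ≤ m - 1 := by
    intro x hx
    have := hS hx
    rw [Finset.mem_Ico] at this
    omega
  have hE0 : E 0 = 1 := by
    rw [hEeq 0 (by omega)]
    have h0 : (⟨0, by omega⟩ : Fin d) = ⟨0, by omega⟩ := rfl
    rw [Finset.orderEmbOfFin_zero hdd.symm (by omega)]
    have hne : S.Nonempty := ⟨1, h1⟩
    refine le_antisymm (Finset.min'_le _ _ h1) ?_
    exact (Finset.le_min'_iff _ _).mpr fun y hy => (hSge y hy).1
  have hEd : E (d - 1) = m - 1 := by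
    rw [hEeq (d - 1) (by omega)]
    rw [Finset.orderEmbOfFin_last hdd.symm (by omega)]
    refine le_antisymm ?_ (Finset.le_max' _ _ hm1)
    exact (Finset.max'_le_iff _ _).mpr fun y hy => (hSge y hy).2
  by_cases hsucc : ∃ s, s ≤ t ∧ lam ≤ E (d - t - 1 + s) - E s + 2
  · obtain ⟨s, hst, hsl⟩ := hsucc
    have hab : E s < E (d - t - 1 + s) := hmono s _ (by omega) (by omega)
    refine ⟨E s, hEmem s (by omega), E (d - t - 1 + s), hEmem _ (by omega), hab, hsl, ?_⟩
    refine ⟨fun j => if j.val < s then E j.val else E (d - t + j.val), ?_, ?_, ?_⟩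
    · intro j j' hjj'
      have hj' : (j' : ℕ) < t := j'.2
      by_cases h1' : (j' : ℕ) < s
      · have h2' : (j : ℕ) < s := by omega
        simp only [if_pos h1', if_pos h2']
        exact hmono _ _ hjj' (by omega)
      · by_cases h2' : (j : ℕ) < s
        · simp only [if_pos h2', if_neg h1']
          exact hmono _ _ (by omega) (by omega)
        · simp only [if_neg h1', if_neg h2']
          exact hmono _ _ (by omega) (by omega)
    · intro j
      by_cases hs : (j : ℕ) < s
      · simp only [if_pos hs]; exact hEmem _ (by omega)
      · simp only [if_neg hs]; have := j.2; exact hEmem _ (by omega)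
    · intro j
      by_cases hs : (j : ℕ) < s
      · simp only [if_pos hs]
        exact Or.inl (hmono _ _ (by omega) (by omega))
      · simp only [if_neg hs]
        have := j.2
        exact Or.inr (hmono _ _ (by omega) (by omega))
  · exfalso
    push_neg at hsucc
    have hfail : ∀ s, s ≤ t → E (d - t - 1 + s) + 3 ≤ E s + lam := by
      intro s hs
      have h1' := hsucc s hs
      have h2' : E s < E (d - t - 1 + s) := hmono s _ (by omega) (by omega)
      omega
    have hf0 : E (d - t - 1) + 3 ≤ 1 + lam := by
      have h := hfail 0 (by omega)
      rw [hE0] at h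
      simpa using h
    have hft : m - 1 + 3 ≤ E t + lam := by
      have h := hfail t (by omega)
      rwa [show d - t - 1 + t = d - 1 by omega, hEd] at h
    have hcardle : (Finset.Ico t (d - t)).card ≤ (Finset.Icc (m + 2 - lam) (lam - 2)).card := by
      apply Finset.card_le_card_of_injOn E
      · intro k hk
        rw [Finset.mem_coe, Finset.mem_Ico] at hk
        rw [Finset.mem_coe, Finset.mem_Icc]
        have hk1 : E t ≤ E k := hmono' t k hk.1 (by omega)
        have hk2 : E k ≤ E (d - t - 1) := hmono' k (d - t - 1) (by omega) (by omega)
        omega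
      · intro i hi j hj hij
        rw [Finset.mem_coe, Finset.mem_Ico] at hi hj
        rcases Nat.lt_trichotomy i j with h | h | h
        · exact absurd hij (by have := hmono i j h (by omega); omega)
        · exact h
        · exact absurd hij (by have := hmono j i h (by omega); omega)
    rw [Nat.card_Ico, Nat.card_Icc] at hcardle
    rcases max_choice (2 * lam - m - 1) 2 with h | h <;> rw [h] at hd <;> omega

/-- Let `λ ≥ 2`, `t ≥ 1`, and let `H` be a Hamiltonian graph on `m ≥ λ` vertices with a
vertex `u₀` of degree at least `2t - 1 + max (2λ - m - 1) 2`.  Then there is `l ≥ λ`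
such that `H` contains a copy of the keyring `C_t(l)` whose center is `u₀`. -/
theorem keyring_in_hamiltonian {V : Type*} [Fintype V]
    [DecidableEq V]
    (lam t : ℕ) (hlam : 2 ≤ lam) (ht : 1 ≤ t)
    (H : SimpleGraph V) [DecidableRel H.Adj]
    (hHam : H.IsHamiltonian)
    (hm : lam ≤ Fintype.card V)
    (u₀ : V)
    (hdeg : 2 * t - 1 + max (2 * lam - Fintype.card V - 1) 2 ≤ H.degree u₀) :
    ∃ (l : ℕ) (hl : 3 ≤ l), lam ≤ l ∧
      ∃ f : (Fin l ⊕ Fin t) → V, Function.Injective f ∧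
        (∀ a b, (keyring l t).Adj a b → H.Adj (f a) (f b)) ∧
        f (Sum.inl ⟨0, by omega⟩) = u₀ := by
  classical
  set m := Fintype.card V with hmdef
  have hdlt : H.degree u₀ < m := H.degree_lt_card_verts u₀
  have hmax2 : 2 ≤ max (2 * lam - m - 1) 2 := le_max_right _ _
  have hm4 : 4 ≤ m := by omega
  obtain ⟨v, hv0, hadj, hlast, hinj, hsurj⟩ := exists_enum H hHam u₀ (by omega)
  set S : Finset ℕ := (Finset.Ico 1 m).filter (fun k => H.Adj u₀ (v k)) with hSdef
  have hSsub : S ⊆ Finset.Ico 1 m := Finset.filter_subset _ _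
  have hSadj : ∀ x ∈ S, H.Adj u₀ (v x) := by
    intro x hx
    exact (Finset.mem_filter.mp hx).2
  have hSrange : ∀ x ∈ S, 1 ≤ x ∧ x ≤ m - 1 := by
    intro x hx
    have := Finset.mem_Ico.mp (hSsub hx)
    omega
  have h1S : 1 ∈ S := by
    rw [hSdef, Finset.mem_filter, Finset.mem_Ico]
    refine ⟨⟨le_rfl, by omega⟩, ?_⟩
    have := hadj 0 (by omega)
    rwa [hv0] at this
  have hm1S : m - 1 ∈ S := by
    rw [hSdef, Finset.mem_filter, Finset.mem_Ico]
    exact ⟨⟨by omega, by omega⟩, hlast.symm⟩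
  have hdegS : H.degree u₀ ≤ S.card := by
    rw [SimpleGraph.degree]
    apply Finset.card_le_card_of_surjOn v
    intro w hw
    rw [Finset.mem_coe, SimpleGraph.mem_neighborFinset] at hw
    obtain ⟨k, hk, hkw⟩ := hsurj w
    have hk0 : k ≠ 0 := by
      intro h
      subst h
      rw [hv0] at hkw
      exact H.irrefl (hkw ▸ hw)
    refine ⟨k, ?_, hkw⟩
    rw [Finset.mem_coe, hSdef, Finset.mem_filter, Finset.mem_Ico]
    exact ⟨⟨by omega, hk⟩, hkw ▸ hw⟩
  set lam' := max lam 3 with hlam'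
  have hcore : 2 * t - 1 + max (2 * lam' - m - 1) 2 ≤ S.card := by
    have hle : max (2 * lam' - m - 1) 2 ≤ max (2 * lam - m - 1) 2 := by
      rcases le_or_gt 3 lam with h | h
      · rw [show lam' = lam by omega]
      · have h2 : lam = 2 := by omega
        have h3 : lam' = 3 := by omega
        rw [h3, Nat.max_eq_right (by omega)]
        exact le_max_right _ _
    omega
  obtain ⟨a, haS, b, hbS, hab, hlab, g, hg, hgS, hgout⟩ :=
    core_lemma lam' t m (by omega) ht S hSsub h1S hm1S hcore
  have ha1 : 1 ≤ a := (hSrange a haS).1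
  have hbm : b ≤ m - 1 := (hSrange b hbS).2
  set l := b - a + 2 with hldef
  have hl3 : 3 ≤ l := by omega
  have hgrange : ∀ j : Fin t, 1 ≤ g j ∧ g j ≤ m - 1 := fun j => hSrange _ (hgS j)
  -- the index map
  set ι : (Fin l ⊕ Fin t) → ℕ := fun x =>
    match x with
    | Sum.inl k => if k.val = 0 then 0 else a + k.val - 1
    | Sum.inr j => g j
    with hι
  have hιlt : ∀ x, ι x < m := by
    intro x
    match x with
    | Sum.inl k =>
      by_cases h : k.val = 0
      · simp only [hι, if_pos h]; omega
      · have := k.2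
        simp only [hι, if_neg h]
        omega
    | Sum.inr j =>
      have := (hgrange j).2
      simp only [hι]
      omega
  have hιinl : ∀ k : Fin l, k.val ≠ 0 → a ≤ ι (Sum.inl k) ∧ ι (Sum.inl k) ≤ b := by
    intro k hk
    have := k.2
    simp only [hι, if_neg hk]
    omega
  refine ⟨l, hl3, by omega, fun x => v (ι x), ?_, ?_, ?_⟩
  · -- injectivity
    intro x y hxy
    have hxy' : ι x = ι y := hinj _ _ (hιlt x) (hιlt y) hxy
    match x, y with
    | Sum.inl k, Sum.inl k' =>
      congr 1
      apply Fin.ext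
      by_cases h : k.val = 0 <;> by_cases h' : k'.val = 0
      · omega
      · exfalso; simp only [hι, if_pos h, if_neg h'] at hxy'; omega
      · exfalso; simp only [hι, if_neg h, if_pos h'] at hxy'; omega
      · simp only [hι, if_neg h, if_neg h'] at hxy'; omega
    | Sum.inl k, Sum.inr j =>
      exfalso
      have hj := hgrange j
      have hout := hgout j
      by_cases h : k.val = 0
      · simp only [hι, if_pos h] at hxy'; omega
      · have := hιinl k h
        simp only [hι] at hxy' this
        omega
    | Sum.inr j, Sum.inl k =>
      exfalso
      have hj := hgrange j
      have hout := hgout j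
      by_cases h : k.val = 0
      · simp only [hι, if_pos h] at hxy'; omega
      · have := hιinl k h
        simp only [hι] at hxy' this
        omega
    | Sum.inr j, Sum.inr j' =>
      congr 1
      exact hg.injective (by simpa [hι] using hxy')
  · -- adjacency
    have hrel1 : ∀ (i j : Fin l), (i.val + 1) % l = j.val →
        H.Adj (v (ι (Sum.inl i))) (v (ι (Sum.inl j))) := by
      intro i j hr
      by_cases h0 : i.val = 0
      · have hj : j.val = 1 := by
          rw [← hr, h0]
          exact Nat.mod_eq_of_lt (by omega)
        have e1 : ι (Sum.inl i) = 0 := by simp only [hι, if_pos h0]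
        have e2 : ι (Sum.inl j) = a := by
          simp only [hι, hj]
          norm_num
        rw [e1, e2, hv0]
        exact hSadj a haS
      · by_cases hl1 : i.val = l - 1
        · have hj : j.val = 0 := by
            rw [← hr, hl1, show l - 1 + 1 = l by omega, Nat.mod_self]
          have e1 : ι (Sum.inl i) = b := by
            simp only [hι, hl1]
            rw [if_neg (by omega : ¬ (l - 1 = 0))]
            omega
          have e2 : ι (Sum.inl j) = 0 := by simp only [hι, if_pos hj]
          rw [e1, e2, hv0]
          exact (hSadj b hbS).symm
        · have hil : i.val < l := i.2
          have hj : j.val = i.val + 1 := by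
            rw [← hr]
            exact Nat.mod_eq_of_lt (by omega)
          have e1 : ι (Sum.inl i) = a + i.val - 1 := by
            simp only [hι]
            rw [if_neg h0]
          have e2 : ι (Sum.inl j) = a + i.val := by
            simp only [hι, hj]
            rw [if_neg (by omega : ¬ (i.val + 1 = 0))]
            omega
          rw [e1, e2]
          have hadj' := hadj (a + i.val - 1) (by omega)
          rwa [show a + i.val - 1 + 1 = a + i.val by omega] at hadj'
    have hrel2 : ∀ (i : Fin l) (j : Fin t), i.val = 0 →
        H.Adj (v (ι (Sum.inl i))) (v (ι (Sum.inr j)))  := by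
      intro i j h0
      have e1 : ι (Sum.inl i) = 0 := by simp only [hι, if_pos h0]
      rw [e1, hv0]
      exact hSadj _ (hgS j)
    intro x y hxy
    rw [keyring, SimpleGraph.fromRel_adj] at hxy
    obtain ⟨hne, hr | hr⟩ := hxy
    · rcases x with i | j <;> rcases y with i' | j'
      · exact hrel1 i i' hr
      · exact hrel2 i j' hr
      · exact hr.elim
      · exact hr.elim
    · rcases x with i | j <;> rcases y with i' | j'
      · exact (hrel1 i' i hr).symm
      · exact hr.elim
      · exact (hrel2 i' j hr).symm
      · exact hr.elim
  · -- center
    exact (by rw [show ι (Sum.inl (⟨0, by omega⟩ : Fin l)) = 0 by simp [hι], hv0] :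
      v (ι (Sum.inl (⟨0, by omega⟩ : Fin l))) = u₀)
end

section
/- If a finite simple graph G is k-minimal, then for every nonempty subset X of the vertices of G, the number of edges of G having at least one endpoint in X is strictly greater than (k-1)/2 · |X|. -/
/-- A finite simple graph `G` is `k`-minimal if `2·e(G) > (k-1)·v(G)` but no proper
subgraph `H` of `G` satisfies `2·e(H) > (k-1)·v(H)`. -/
def IsKMinimal (k : ℕ) {V : Type*} [Fintype V] (G : SimpleGraph V) : Prop :=
  2 * G.edgeSet.ncard > (k - 1) * Fintype.card V ∧
    ∀ H : G.Subgraph, H ≠ ⊤ → ¬ (2 * H.edgeSet.ncard > (k - 1) * H.verts.ncard)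

/-- If `G` is `k`-minimal, then for every nonempty set `X` of vertices, the number of
edges of `G` with at least one endpoint in `X` is strictly more than `(k-1)/2 · |X|`
(stated multiplied through by `2`). -/
theorem kMinimal_edge_bound {V : Type*} [Fintype V] (k : ℕ)
    (G : SimpleGraph V) (hG : IsKMinimal k G) :
    ∀ X : Finset V, X.Nonempty →
      (k - 1) * X.card < 2 * {e ∈ G.edgeSet | ∃ v ∈ X, v ∈ e}.ncard := by
  classical
  intro X hX
  obtain ⟨hG1, hG2⟩ := hG
  set H : G.Subgraph := (⊤ : G.Subgraph).induce ((↑X : Set V)ᶜ) with hH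
  have hverts : H.verts = ((↑X : Set V)ᶜ) := rfl
  have hne : H ≠ ⊤ := by
    intro h
    obtain ⟨x, hx⟩ := hX
    have hx' : x ∈ H.verts := by rw [h]; trivial
    rw [hverts] at hx'
    exact hx' (by exact_mod_cast hx)
  have hbound := hG2 H hne
  push_neg at hbound
  -- characterize H.edgeSet
  have hHE : H.edgeSet = {e ∈ G.edgeSet | ¬ ∃ v ∈ X, v ∈ e} := by
    ext e
    induction e with
    | _ u v =>
      simp only [SimpleGraph.Subgraph.mem_edgeSet, hH, SimpleGraph.Subgraph.induce_adj,
        SimpleGraph.Subgraph.top_adj, Set.mem_setOf_eq, SimpleGraph.mem_edgeSet,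
        Set.mem_compl_iff, Finset.mem_coe, Sym2.mem_iff]
      constructor
      · rintro ⟨hu, hv, hadj⟩
        exact ⟨hadj, by rintro ⟨w, hw, rfl | rfl⟩ <;> [exact hu hw; exact hv hw]⟩
      · rintro ⟨hadj, hno⟩
        exact ⟨fun hu => hno ⟨u, hu, Or.inl rfl⟩, fun hv => hno ⟨v, hv, Or.inr rfl⟩, hadj⟩
  set D : Set (Sym2 V) := {e ∈ G.edgeSet | ∃ v ∈ X, v ∈ e} with hD
  have hunion : D ∪ H.edgeSet = G.edgeSet := by
    rw [hHE]
    ext e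
    simp only [Set.mem_union, Set.mem_setOf_eq, hD]
    constructor
    · rintro (⟨h, _⟩ | ⟨h, _⟩) <;> exact h
    · intro h
      by_cases hex : ∃ v ∈ X, v ∈ e
      · exact Or.inl ⟨h, hex⟩
      · exact Or.inr ⟨h, hex⟩
  have hdisj : Disjoint D H.edgeSet := by
    rw [hHE, Set.disjoint_left]
    rintro e ⟨he, hex⟩ ⟨_, hnex⟩
    exact hnex hex
  have hcard : G.edgeSet.ncard = D.ncard + H.edgeSet.ncard := by
    rw [← hunion, Set.ncard_union_eq hdisj (Set.toFinite _) (Set.toFinite _)]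
  have hvcard : H.verts.ncard = Xᶜ.card := by
    rw [hverts, ← Finset.coe_compl, Set.ncard_coe_finset]
  have hV : Fintype.card V = X.card + Xᶜ.card := (Finset.card_add_card_compl X).symm
  rw [hV, Nat.mul_add] at hG1
  rw [hvcard] at hbound
  rw [hcard] at hG1
  omega
end
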